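/- (LeCam's inequality) Let S = I_1 + ... + I_n be a sum of independent Bernoulli random variables with P(I_i = 1) = p_i, and let Λ be a Poisson random variable with mean p_1 + ... + p_n. Then the total variation distance between the distributions of S and Λ satisfies d_TV(S, Λ) ≤ Σ_i p_i². -/

import Mathlib

open MeasureTheory ProbabilityTheory Finset
open scoped NNReal ENNReal

namespace LeCamAux

lemma measSet (A : Set ℕ) : MeasurableSet A := by
  exact MeasurableSpace.measurableSet_top

lemma poissonPMF_apply (r : ℝ≥0) (n : ℕ) :
    poissonPMF r n = ENNReal.ofReal (poissonPMFReal r n) := rfl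

lemma poissonMeasure_apply (r : ℝ≥0) (A : Set ℕ) :
    poissonMeasure r A = ∑' n, A.indicator (⇑(poissonPMF r)) n := by
  rw [poissonMeasure, Measure.sum_apply _ (measSet A)]
  congr 1; funext n
  rw [Measure.smul_apply, Measure.dirac_apply' _ (measSet A), smul_eq_mul]
  by_cases hn : n ∈ A <;> simp [hn, poissonPMF_apply, poissonPMFReal]

lemma pmf_conv (q t : ℝ≥0) (n : ℕ) :
    poissonPMFReal (q + t) n
      = ∑ k ∈ Finset.range (n + 1), poissonPMFReal q k * poissonPMFReal t (n - k) := by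
  have key : ∀ k ∈ Finset.range (n + 1),
      poissonPMFReal q k * poissonPMFReal t (n - k)
        = (Real.exp (-((q:ℝ) + t)) / (n.factorial : ℝ))
            * ((q:ℝ) ^ k * (t:ℝ) ^ (n - k) * (n.choose k : ℝ)) := by
    intro k hk
    have hk' : k ≤ n := Nat.lt_succ_iff.mp (Finset.mem_range.mp hk)
    have hfac : (n.choose k : ℝ) * (k.factorial : ℝ) * ((n-k).factorial : ℝ)
        = (n.factorial : ℝ) := by
      exact_mod_cast congrArg (Nat.cast : ℕ → ℝ)
        (Nat.choose_mul_factorial_mul_factorial hk')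
    unfold poissonPMFReal
    have h1 : (k.factorial : ℝ) ≠ 0 := by positivity
    have h2 : ((n-k).factorial : ℝ) ≠ 0 := by positivity
    have h3 : (n.factorial : ℝ) ≠ 0 := by positivity
    rw [neg_add, Real.exp_add]
    field_simp
    linear_combination (-1 * (q:ℝ)^k * (t:ℝ)^(n-k)) * hfac
  rw [Finset.sum_congr rfl key, ← Finset.mul_sum, ← add_pow]
  unfold poissonPMFReal
  push_cast
  ring


lemma measure_conv (q t : ℝ≥0) (A : Set ℕ) :
    poissonMeasure (q + t) A
      = ∑' k, poissonPMF q k * poissonMeasure t {m | k + m ∈ A} := by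
  classical
  set F : ℕ → ℕ → ℝ≥0∞ := fun k n =>
    if k ≤ n then A.indicator (fun x => poissonPMF q k * poissonPMF t (x - k)) n else 0 with hF
  have pmfconv : ∀ n, poissonPMF (q + t) n
      = ∑ k ∈ Finset.range (n+1), poissonPMF q k * poissonPMF t (n - k) := by
    intro n
    rw [poissonPMF_apply, pmf_conv, ENNReal.ofReal_sum_of_nonneg
      (fun k _ => mul_nonneg poissonPMFReal_nonneg poissonPMFReal_nonneg)]
    exact Finset.sum_congr rfl fun k hk => by
      rw [ENNReal.ofReal_mul poissonPMFReal_nonneg]; rfl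
  have h1 : poissonMeasure (q + t) A = ∑' n, ∑' k, F k n := by
    rw [poissonMeasure_apply]
    congr 1; funext n
    by_cases hn : n ∈ A
    · rw [Set.indicator_of_mem hn, pmfconv]
      rw [tsum_eq_sum (s := Finset.range (n+1)) ?side]
      · exact Finset.sum_congr rfl fun k hk => by
          have hk' : k ≤ n := Nat.lt_succ_iff.mp (Finset.mem_range.mp hk)
          simp [hF, hk', Set.indicator_of_mem hn]
      case side =>
        intro k hk
        have hkn : ¬ k ≤ n := fun h => hk (Finset.mem_range.mpr (Nat.lt_succ_of_le h))
        simp [hF, hkn]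
    · rw [Set.indicator_of_notMem hn]
      symm
      simp only [hF, Set.indicator_of_notMem hn]
      simp
  rw [h1, ENNReal.tsum_comm]
  congr 1; funext k
  have h2 : ∑' n, F k n = ∑' m, F k (k + m) := by
    refine (Function.Injective.tsum_eq (g := fun m => k + m)
      (fun a b h => by simpa using h) ?_).symm
    intro n hn
    rcases le_or_gt k n with h | h
    · exact ⟨n - k, Nat.add_sub_cancel' h⟩
    · exfalso
      apply hn
      simp [hF, not_le.mpr h]
  rw [h2]
  have h3 : ∀ m, F k (k + m)
      = poissonPMF q k * ({m | k + m ∈ A}.indicator (⇑(poissonPMF t)) m) := by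
    intro m
    have hk : k ≤ k + m := Nat.le_add_right _ _
    by_cases hm : k + m ∈ A
    · simp [hF, hk, Set.indicator_of_mem hm, Set.indicator_of_mem (show m ∈ {m | k + m ∈ A} from hm)]
    · simp [hF, hk, Set.indicator_of_notMem hm,
        Set.indicator_of_notMem (show m ∉ {m | k + m ∈ A} from hm)]
  simp only [h3]
  rw [ENNReal.tsum_mul_left, poissonMeasure_apply]

lemma measure_conv_real (q t : ℝ≥0) (A : Set ℕ) :
    (poissonMeasure (q + t) A).toReal
      = ∑' k, poissonPMFReal q k * (poissonMeasure t {m | k + m ∈ A}).toReal := by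
  rw [measure_conv, ENNReal.tsum_toReal_eq
    (fun k => ENNReal.mul_ne_top (poissonPMF_apply q k ▸ ENNReal.ofReal_ne_top)
      (measure_ne_top _ _))]
  congr 1; funext k
  rw [ENNReal.toReal_mul, poissonPMF_apply, ENNReal.toReal_ofReal poissonPMFReal_nonneg]

lemma key (p : ℝ≥0) (c : ℕ → ℝ) (hc0 : ∀ k, 0 ≤ c k) (hc1 : ∀ k, c k ≤ 1) :
    |(1 - (p:ℝ)) * c 0 + (p:ℝ) * c 1 - ∑' k, poissonPMFReal p k * c k| ≤ (p:ℝ) ^ 2 := by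
  set P := (p:ℝ) with hP
  have hp0 : (0:ℝ) ≤ P := p.coe_nonneg
  set e := Real.exp (-P) with he
  have hepos : 0 < e := Real.exp_pos _
  have he1 : e ≤ 1 := by
    rw [he, ← Real.exp_zero]
    exact Real.exp_le_exp.mpr (by linarith)
  have h1p : 1 - P ≤ e := by
    have := Real.add_one_le_exp (-P)
    linarith
  have ha : Summable (fun k => poissonPMFReal p k) := (poissonPMFRealSum p).summable
  have hsum1 : ∑' k, poissonPMFReal p k = 1 := (poissonPMFRealSum p).tsum_eq
  have hsummc : Summable (fun k => poissonPMFReal p k * c k) :=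
    Summable.of_nonneg_of_le (fun k => mul_nonneg poissonPMFReal_nonneg (hc0 k))
      (fun k => mul_le_of_le_one_right poissonPMFReal_nonneg (hc1 k)) ha
  have e0 : poissonPMFReal p 0 = e := by simp [poissonPMFReal, he, hP]
  have e1 : poissonPMFReal p 1 = e * P := by
    simp [poissonPMFReal, he, hP, mul_comm]
  have splitgen : ∀ f : ℕ → ℝ, Summable f →
      ∑' k, f k = f 0 + f 1 + ∑' k, f (k + 2) := by
    intro f hf
    rw [Summable.tsum_eq_zero_add hf, Summable.tsum_eq_zero_add ((summable_nat_add_iff 1).mpr hf)]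
    have h11 : ∀ b : ℕ, b + 1 + 1 = b + 2 := fun b => rfl
    simp only [h11]
    ring
  have hsplit := splitgen _ hsummc
  have hsplita := splitgen _ ha
  rw [hsum1] at hsplita
  set T := ∑' k, poissonPMFReal p (k + 2) * c (k + 2) with hT
  have hTa : ∑' k, poissonPMFReal p (k + 2) = 1 - e - e * P := by
    rw [e0, e1] at hsplita; linarith
  have hT0 : 0 ≤ T :=
    tsum_nonneg fun k => mul_nonneg poissonPMFReal_nonneg (hc0 _)
  have hT1 : T ≤ 1 - e - e * P := by
    rw [← hTa]
    exact Summable.tsum_le_tsum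
      (fun k => mul_le_of_le_one_right poissonPMFReal_nonneg (hc1 _))
      ((summable_nat_add_iff 2).mpr hsummc) ((summable_nat_add_iff 2).mpr ha)
  rw [hsplit, e0, e1]
  have hC : P - e * P ≤ P ^ 2 := by nlinarith
  rw [abs_le]
  constructor
  · have hD : (1 - P - e) ≤ (1 - P - e) * c 0 := by nlinarith [hc0 0, hc1 0]
    have hE : 0 ≤ (P - e * P) * c 1 := mul_nonneg (by nlinarith) (hc0 1)
    nlinarith
  · have hA : (1 - P - e) * c 0 ≤ 0 :=
      mul_nonpos_of_nonpos_of_nonneg (by linarith) (hc0 0)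
    have hB : (P - e * P) * c 1 ≤ P - e * P :=
      mul_le_of_le_one_right (by nlinarith) (hc1 1)
    nlinarith

open scoped Classical in
lemma poissonMeasure_zero (A : Set ℕ) :
    poissonMeasure 0 A = if (0:ℕ) ∈ A then 1 else 0 := by
  rw [poissonMeasure_apply]
  rw [tsum_eq_single 0 ?h]
  · by_cases h0 : (0:ℕ) ∈ A
    · rw [Set.indicator_of_mem h0, if_pos h0, poissonPMF_apply]
      simp [poissonPMFReal]
    · rw [Set.indicator_of_notMem h0, if_neg h0]
  · intro n hn
    have : poissonPMF 0 n = 0 := by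
      rw [poissonPMF_apply]
      simp [poissonPMFReal, zero_pow hn]
    simp [Set.indicator_apply, this]

end LeCamAux

/-- LeCam's inequality: if `S = I_1 + ⋯ + I_n` is a sum of independent Bernoulli random
variables with `P(I_i = 1) = p_i` and `Λ` is Poisson with mean `∑ p_i`, then for every
set `A ⊆ ℕ`, `|P(S ∈ A) - P(Λ ∈ A)| ≤ ∑ p_i²`. -/
theorem stmt1 {Ω : Type*} [MeasurableSpace Ω] (μ : Measure Ω) [IsProbabilityMeasure μ]
    (n : ℕ) (I : Fin n → Ω → ℕ) (p : Fin n → ℝ≥0)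
    (hmeas : ∀ i, Measurable (I i))
    (hindep : iIndepFun I μ)
    (hBer : ∀ i ω, I i ω = 0 ∨ I i ω = 1)
    (hp : ∀ i, μ {ω | I i ω = 1} = ENNReal.ofReal (p i)) :
    ∀ A : Set ℕ,
      |(μ {ω | (∑ i, I i ω) ∈ A}).toReal - ((poissonMeasure (∑ i, p i)) A).toReal|
        ≤ ∑ i, ((p i : ℝ)) ^ 2 := by
  suffices h : ∀ s : Finset (Fin n), ∀ A : Set ℕ,
      |(μ {ω | (∑ i ∈ s, I i ω) ∈ A}).toReal - ((poissonMeasure (∑ i ∈ s, p i)) A).toReal|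
        ≤ ∑ i ∈ s, ((p i : ℝ)) ^ 2 by
    intro A; exact h Finset.univ A
  intro s
  induction s using Finset.induction_on with
  | empty =>
      intro A
      simp only [Finset.sum_empty]
      rw [LeCamAux.poissonMeasure_zero]
      by_cases h0 : (0:ℕ) ∈ A
      · have he : {ω : Ω | (0:ℕ) ∈ A} = Set.univ := by
          ext ω; simp [h0]
        rw [he, if_pos h0]
        simp
      · have he : {ω : Ω | (0:ℕ) ∈ A} = ∅ := by
          ext ω; simp [h0]
        rw [he, if_neg h0]
        simp
  | @insert j s hj ih =>
      intro A
      have hPle : ((p j : ℝ)) ≤ 1 := by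
        have h1 : μ {ω | I j ω = 1} ≤ 1 := prob_le_one
        rw [hp j] at h1
        exact ENNReal.ofReal_le_one.mp h1
      have hP0 : (0:ℝ) ≤ (p j : ℝ) := (p j).coe_nonneg
      have hSmeas : Measurable (fun ω => ∑ i ∈ s, I i ω) :=
        Finset.measurable_sum s (fun i _ => hmeas i)
      have hind : IndepFun (∑ i ∈ s, I i) (I j) μ :=
        hindep.indepFun_finsetSum_of_notMem hmeas hj
      have happ : (∑ i ∈ s, I i) = (fun ω => ∑ i ∈ s, I i ω) := by
        funext ω; simp [Finset.sum_apply]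
      rw [happ] at hind
      have hpre1 : I j ⁻¹' {1} = {ω | I j ω = 1} := rfl
      have hpre0 : I j ⁻¹' {0} = {ω | I j ω = 1}ᶜ := by
        ext ω
        rcases hBer j ω with h | h <;> simp [h]
      have hμ1 : μ (I j ⁻¹' {1}) = ENNReal.ofReal (p j) := by rw [hpre1, hp j]
      have hμ0 : μ (I j ⁻¹' {0}) = 1 - ENNReal.ofReal (p j) := by
        rw [hpre0, measure_compl (by
          have : {ω | I j ω = 1} = I j ⁻¹' {1} := rfl
          rw [this]; exact hmeas j (measurableSet_singleton 1)) (measure_ne_top _ _),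
          measure_univ, hp j]
      have hrec : ∀ B : Set ℕ, μ {ω | (I j ω + ∑ i ∈ s, I i ω) ∈ B}
          = (1 - ENNReal.ofReal (p j)) * μ {ω | (∑ i ∈ s, I i ω) ∈ B}
            + ENNReal.ofReal (p j) * μ {ω | (∑ i ∈ s, I i ω) ∈ {m | 1 + m ∈ B}} := by
        intro B
        have hseteq : {ω | (I j ω + ∑ i ∈ s, I i ω) ∈ B}
            = (I j ⁻¹' {0} ∩ (fun ω => ∑ i ∈ s, I i ω) ⁻¹' B)
              ∪ (I j ⁻¹' {1} ∩ (fun ω => ∑ i ∈ s, I i ω) ⁻¹' {m | 1 + m ∈ B}) := by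
          ext ω
          rcases hBer j ω with h | h <;>
            simp [Set.mem_preimage, Set.mem_setOf_eq, h]
        have hdisj : Disjoint (I j ⁻¹' {0} ∩ (fun ω => ∑ i ∈ s, I i ω) ⁻¹' B)
            (I j ⁻¹' {1} ∩ (fun ω => ∑ i ∈ s, I i ω) ⁻¹' {m | 1 + m ∈ B}) := by
          apply Set.disjoint_left.mpr
          rintro ω ⟨h0, -⟩ ⟨h1, -⟩
          simp only [Set.mem_preimage, Set.mem_singleton_iff] at h0 h1
          omega
        rw [hseteq, measure_union hdisj
          (((hmeas j) (measurableSet_singleton 1)).inter (hSmeas (LeCamAux.measSet _)))]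
        rw [Set.inter_comm (I j ⁻¹' {0}) _, Set.inter_comm (I j ⁻¹' {1}) _]
        rw [hind.measure_inter_preimage_eq_mul _ _ (LeCamAux.measSet _)
            (measurableSet_singleton 0),
          hind.measure_inter_preimage_eq_mul _ _ (LeCamAux.measSet _)
            (measurableSet_singleton 1)]
        rw [hμ0, hμ1]
        have hpB : (fun ω => ∑ i ∈ s, I i ω) ⁻¹' B
            = {ω | (∑ i ∈ s, I i ω) ∈ B} := rfl
        have hpB1 : (fun ω => ∑ i ∈ s, I i ω) ⁻¹' {m | 1 + m ∈ B}
            = {ω | (∑ i ∈ s, I i ω) ∈ {m | 1 + m ∈ B}} := rfl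
        rw [hpB, hpB1]
        ring
      have hfin1 : (1 : ℝ≥0∞) - ENNReal.ofReal (p j) ≠ ⊤ :=
        ne_top_of_le_ne_top ENNReal.one_ne_top tsub_le_self
      have hofR : ENNReal.ofReal ((p j : ℝ)) ≠ ⊤ := ENNReal.ofReal_ne_top
      have hrecR : ∀ B : Set ℕ, (μ {ω | (I j ω + ∑ i ∈ s, I i ω) ∈ B}).toReal
          = (1 - (p j : ℝ)) * (μ {ω | (∑ i ∈ s, I i ω) ∈ B}).toReal
            + (p j : ℝ) * (μ {ω | (∑ i ∈ s, I i ω) ∈ {m | 1 + m ∈ B}}).toReal := by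
        intro B
        rw [hrec B, ENNReal.toReal_add
          (ENNReal.mul_ne_top hfin1 (measure_ne_top _ _))
          (ENNReal.mul_ne_top hofR (measure_ne_top _ _)),
          ENNReal.toReal_mul, ENNReal.toReal_mul,
          ENNReal.toReal_ofReal hP0,
          ENNReal.toReal_sub_of_le (ENNReal.ofReal_le_one.mpr hPle) ENNReal.one_ne_top,
          ENNReal.toReal_one, ENNReal.toReal_ofReal hP0]
      -- Poisson side
      set t : ℝ≥0 := ∑ i ∈ s, p i with ht
      set c : ℕ → ℝ := fun k => (poissonMeasure t {m | k + m ∈ A}).toReal with hc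
      have hc0 : ∀ k, 0 ≤ c k := fun k => ENNReal.toReal_nonneg
      have hc1 : ∀ k, c k ≤ 1 := by
        intro k
        have := (ENNReal.toReal_le_toReal (measure_ne_top _ _) ENNReal.one_ne_top).mpr
          (prob_le_one (μ := poissonMeasure t) (s := {m | k + m ∈ A}))
        simpa using this
      have hc0A : c 0 = (poissonMeasure t A).toReal := by
        have : {m | 0 + m ∈ A} = A := by ext m; simp
        rw [hc]; simp only [this]
      have hkey := LeCamAux.key (p j) c hc0 hc1
      have hconv : (poissonMeasure (p j + t) A).toReal
          = ∑' k, poissonPMFReal (p j) k * c k := LeCamAux.measure_conv_real (p j) t A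
      have ih0 := ih A
      have ih1 := ih {m | 1 + m ∈ A}
      rw [← hc0A] at ih0
      have hc1A : c 1 = (poissonMeasure t {m | 1 + m ∈ A}).toReal := rfl
      rw [← hc1A] at ih1
      -- assemble
      have hsump : ∑ i ∈ insert j s, p i = p j + t := Finset.sum_insert hj
      have hsumsq : ∑ i ∈ insert j s, ((p i : ℝ)) ^ 2
          = (p j : ℝ) ^ 2 + ∑ i ∈ s, ((p i : ℝ)) ^ 2 := Finset.sum_insert hj
      have hsumI : ∀ ω, ∑ i ∈ insert j s, I i ω = I j ω + ∑ i ∈ s, I i ω :=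
        fun ω => Finset.sum_insert hj
      simp only [hsumI, hsump, hsumsq]
      rw [hrecR A, hconv]
      have hB0 : (0:ℝ) ≤ ∑ i ∈ s, ((p i : ℝ)) ^ 2 :=
        Finset.sum_nonneg fun i _ => sq_nonneg _
      obtain ⟨ih0l, ih0u⟩ := abs_le.mp ih0
      obtain ⟨ih1l, ih1u⟩ := abs_le.mp ih1
      obtain ⟨hkl, hku⟩ := abs_le.mp hkey
      rw [abs_le]
      constructor <;> nlinarith [mul_le_mul_of_nonneg_left ih0u (by linarith : (0:ℝ) ≤ 1 - (p j : ℝ)),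
        mul_le_mul_of_nonneg_left ih0l (by linarith : (0:ℝ) ≤ 1 - (p j : ℝ)),
        mul_le_mul_of_nonneg_left ih1u hP0, mul_le_mul_of_nonneg_left ih1l hP0]
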